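/- Let H be a complex Hilbert space and let 𝒮 be a set of bounded ℂ-linear operators on H, each of which is skew-adjoint (T* = −T), such that the only closed complex subspaces of H invariant under every member of 𝒮 are {0} and H. If U is a closed real-linear subspace of H invariant under every member of 𝒮 with U ≠ {0} and U ≠ H, then U is an invariant real form of H: U ∩ iU = {0} and every element of H can be written as u + i·v with u, v ∈ U. -/

import Mathlib

lemma aux_commute_cfc {H : Type*} [NormedAddCommGroup H] [InnerProductSpace ℂ H]
    [CompleteSpace H] (S A : H →L[ℂ] H) (hA : IsSelfAdjoint A)
    (h : S * A = A * S) (f : ℝ → ℝ) : S * cfc f A = cfc f A * S := by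
  by_cases hf : ContinuousOn f (spectrum ℝ A)
  · have hpoly : ∀ p : Polynomial ℝ,
        cfcHom (R := ℝ) hA (p.toContinuousMapOn (spectrum ℝ A)) = Polynomial.aeval A p := by
      intro p
      have hhom : (cfcHom (R := ℝ) hA).toAlgHom.comp
          (Polynomial.toContinuousMapOnAlgHom (spectrum ℝ A)) = Polynomial.aeval A := by
        apply Polynomial.algHom_ext
        show cfcHom hA (Polynomial.X.toContinuousMapOn (spectrum ℝ A)) = Polynomial.aeval A Polynomial.X
        rw [Polynomial.aeval_X]
        have : (Polynomial.X.toContinuousMapOn (spectrum ℝ A))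
            = (ContinuousMap.id ℝ).restrict (spectrum ℝ A) := by
          ext x; simp [Polynomial.toContinuousMapOn, Polynomial.toContinuousMap]
        rw [this, cfcHom_id hA]
      exact congrArg (fun φ => φ p) hhom
    have haev : ∀ p : Polynomial ℝ, S * Polynomial.aeval A p = Polynomial.aeval A p * S := by
      intro p
      induction p using Polynomial.induction_on' with
      | add p q hp hq => rw [map_add, mul_add, add_mul, hp, hq]
      | monomial n a =>
          rw [Polynomial.aeval_monomial]
          exact Commute.mul_right ((Algebra.commutes a S).symm) (Commute.pow_right h n)
    have key : ∀ g : C(spectrum ℝ A, ℝ), S * cfcHom (R := ℝ) hA g = cfcHom (R := ℝ) hA g * S := by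
      intro g
      have hmem : g ∈ closure (polynomialFunctions (spectrum ℝ A) : Set C(spectrum ℝ A, ℝ)) := by
        rw [← Subalgebra.topologicalClosure_coe, polynomialFunctions.topologicalClosure]
        trivial
      have hc : Continuous (cfcHom (R := ℝ) hA) := (cfcHom_isClosedEmbedding hA).continuous
      have hclosed : IsClosed {g : C(spectrum ℝ A, ℝ) |
          S * cfcHom (R := ℝ) hA g = cfcHom (R := ℝ) hA g * S} :=
        isClosed_eq ((continuous_mul_left S).comp hc) ((continuous_mul_right S).comp hc)
      refine hclosed.closure_subset_iff.mpr ?_ hmem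
      rintro g hg
      rw [polynomialFunctions_coe] at hg
      obtain ⟨p, rfl⟩ := hg
      show S * cfcHom hA (p.toContinuousMapOn (spectrum ℝ A))
          = cfcHom hA (p.toContinuousMapOn (spectrum ℝ A)) * S
      rw [hpoly p]
      exact haev p
    rw [cfc_apply f A hA hf]
    exact key _
  · rw [cfc_apply_of_not_continuousOn A hf, mul_zero, zero_mul]



lemma aux_schur {H : Type*} [NormedAddCommGroup H] [InnerProductSpace ℂ H] [CompleteSpace H]
    (𝒮 : Set (H →L[ℂ] H))
    (hirr : ∀ V : Submodule ℂ H, IsClosed (V : Set H) →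
      (∀ T ∈ 𝒮, ∀ v ∈ V, T v ∈ V) → V = ⊥ ∨ V = ⊤)
    (A : H →L[ℂ] H) (hA : IsSelfAdjoint A) (hcomm : ∀ S ∈ 𝒮, S * A = A * S) :
    ∃ c : ℝ, ∀ x, A x = c • x := by
  -- spectrum has at most one point
  have htwo : ∀ a ∈ spectrum ℝ A, ∀ b ∈ spectrum ℝ A, a = b := by
    by_contra hcon
    push_neg at hcon
    obtain ⟨a, ha, b, hb, hab⟩ := hcon
    set d : ℝ := |a - b| with hd_def
    have hd : 0 < d := abs_pos.mpr (sub_ne_zero.mpr hab)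
    set f : ℝ → ℝ := fun t => max (1 - 2 / d * |t - a|) 0 with hf_def
    set g : ℝ → ℝ := fun t => max (1 - 2 / d * |t - b|) 0 with hg_def
    have hfc : Continuous f := by fun_prop
    have hgc : Continuous g := by fun_prop
    have hfa : f a = 1 := by simp [hf_def]
    have hgb : g b = 1 := by simp [hg_def]
    have hmul : ∀ t, f t * g t = 0 := by
      intro t
      have htri : d ≤ |t - a| + |t - b| := by
        have := abs_sub_abs_le_abs_sub (a - b) (t - b)
        have h2 := abs_sub (a - t) (b - t)
        calc d = |a - b| := rfl
          _ = |(a - t) + (t - b)| := by ring_nf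
          _ ≤ |a - t| + |t - b| := abs_add_le _ _
          _ = |t - a| + |t - b| := by rw [abs_sub_comm]
      rcases le_or_gt (d / 2) |t - a| with hta | hta
      · have : 1 - 2 / d * |t - a| ≤ 0 := by
          have : (1 : ℝ) ≤ 2 / d * |t - a| := by
            rw [div_mul_eq_mul_div, le_div_iff₀ hd]
            nlinarith
          linarith
        have : f t = 0 := max_eq_right this
        rw [this, zero_mul]
      · have htb : d / 2 ≤ |t - b| := by linarith
        have : 1 - 2 / d * |t - b| ≤ 0 := by
          have : (1 : ℝ) ≤ 2 / d * |t - b| := by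
            rw [div_mul_eq_mul_div, le_div_iff₀ hd]
            nlinarith
          linarith
        have : g t = 0 := max_eq_right this
        rw [this, mul_zero]
    set F := cfc f A with hF_def
    set G := cfc g A with hG_def
    have hF1 : (1 : ℝ) ≤ ‖F‖ := by
      have := norm_apply_le_norm_cfc f A ha hfc.continuousOn hA
      rwa [hfa, norm_one] at this
    have hG1 : (1 : ℝ) ≤ ‖G‖ := by
      have := norm_apply_le_norm_cfc g A hb hgc.continuousOn hA
      rwa [hgb, norm_one] at this
    have hGF : G * F = 0 := by
      rw [hG_def, hF_def, ← cfc_mul g f A hgc.continuousOn hfc.continuousOn]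
      have : (fun x => g x * f x) = (0 : ℝ → ℝ) := by
        funext t; rw [mul_comm]; exact hmul t
      rw [this, cfc_zero]
    -- closure of range of F
    set M : Submodule ℂ H := (LinearMap.range (F : H →ₗ[ℂ] H)).topologicalClosure with hM_def
    have hMclosed : IsClosed (M : Set H) := (LinearMap.range (F : H →ₗ[ℂ] H)).isClosed_topologicalClosure
    have hMrange : (LinearMap.range (F : H →ₗ[ℂ] H) : Set H) ⊆ (M : Set H) :=
      (LinearMap.range (F : H →ₗ[ℂ] H)).le_topologicalClosure
    have hMinv : ∀ T ∈ 𝒮, ∀ v ∈ M, T v ∈ M := by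
      intro T hT v hv
      have hcommF : T * F = F * T := aux_commute_cfc T A hA (hcomm T hT) f
      have himg : T '' (LinearMap.range (F : H →ₗ[ℂ] H) : Set H)
          ⊆ (LinearMap.range (F : H →ₗ[ℂ] H) : Set H) := by
        rintro _ ⟨_, ⟨x, rfl⟩, rfl⟩
        refine ⟨T x, ?_⟩
        have := congrArg (fun (o : H →L[ℂ] H) => o x) hcommF
        simpa using this.symm
      have hv' : v ∈ closure (LinearMap.range (F : H →ₗ[ℂ] H) : Set H) := by
        rwa [← SetLike.mem_coe, Submodule.topologicalClosure_coe] at hv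
      have : T v ∈ closure (T '' (LinearMap.range (F : H →ₗ[ℂ] H) : Set H)) :=
        image_closure_subset_closure_image T.continuous ⟨v, hv', rfl⟩
      have : T v ∈ closure (LinearMap.range (F : H →ₗ[ℂ] H) : Set H) :=
        closure_mono himg this
      rwa [← SetLike.mem_coe, Submodule.topologicalClosure_coe]
    have hFne : F ≠ 0 := by
      intro h0
      rw [h0, norm_zero] at hF1
      linarith
    have hMne : M ≠ ⊥ := by
      intro hbot
      apply hFne
      ext x
      have : F x ∈ M := hMrange ⟨x, rfl⟩
      rw [hbot, Submodule.mem_bot] at this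
      simpa using this
    have hMtop : M = ⊤ := (hirr M hMclosed hMinv).resolve_left hMne
    have hG0 : G = 0 := by
      ext x
      have hx : x ∈ closure (LinearMap.range (F : H →ₗ[ℂ] H) : Set H) := by
        have : x ∈ M := by rw [hMtop]; trivial
        rwa [← SetLike.mem_coe, Submodule.topologicalClosure_coe] at this
      have hvanish : ∀ y ∈ (LinearMap.range (F : H →ₗ[ℂ] H) : Set H), G y = 0 := by
        rintro _ ⟨y, rfl⟩
        have := congrArg (fun (o : H →L[ℂ] H) => o y) hGF
        simpa using this
      have hclosed : IsClosed {y : H | G y = 0} :=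
        isClosed_eq G.continuous continuous_const
      have := hclosed.closure_subset_iff.mpr hvanish hx
      simpa using this
    rw [hG0, norm_zero] at hG1
    linarith
  -- now spectrum is contained in a single point
  obtain ⟨c, hc⟩ : ∃ c : ℝ, ∀ t ∈ spectrum ℝ A, t = c := by
    rcases (spectrum ℝ A).eq_empty_or_nonempty with hs | ⟨c, hc⟩
    · exact ⟨1, fun t ht => absurd ht (by rw [hs]; exact Set.notMem_empty t)⟩
    · exact ⟨c, fun t ht => htwo t ht c hc⟩
  have hAc : A = algebraMap ℝ (H →L[ℂ] H) c := by
    conv_lhs => rw [← cfc_id ℝ A hA]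
    rw [show (id : ℝ → ℝ) = fun t : ℝ => t from rfl]
    rw [cfc_congr (g := fun _ : ℝ => c) (fun t ht => hc t ht)]
    exact cfc_const c A hA
  refine ⟨c, fun x => ?_⟩
  rw [hAc, Algebra.algebraMap_eq_smul_one]
  simp


open scoped InnerProductSpace

/-- let `𝒮` be a set of bounded skew-adjoint `ℂ`-linear operators on a complex
Hilbert space `H` admitting no nontrivial closed invariant complex subspace.  Then any closed
real subspace `U` invariant under `𝒮` with `U ≠ {0}` and `U ≠ H` is an invariant real form:
`U ∩ iU = {0}` and every element of `H` is `u + i v` with `u, v ∈ U`. -/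
theorem real_invariant_subspace_is_real_form
    {H : Type*} [NormedAddCommGroup H] [InnerProductSpace ℂ H] [CompleteSpace H]
    (𝒮 : Set (H →L[ℂ] H))
    (hskew : ∀ T ∈ 𝒮, ContinuousLinearMap.adjoint T = -T)
    (hirr : ∀ V : Submodule ℂ H, IsClosed (V : Set H) →
      (∀ T ∈ 𝒮, ∀ v ∈ V, T v ∈ V) → V = ⊥ ∨ V = ⊤)
    (U : Submodule ℝ H)
    (hUclosed : IsClosed (U : Set H))
    (hUinv : ∀ T ∈ 𝒮, ∀ u ∈ U, T u ∈ U)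
    (hU0 : U ≠ ⊥) (hUH : U ≠ ⊤) :
    ((U : Set H) ∩ ((fun v => Complex.I • v) '' (U : Set H)) = {0}) ∧
    (∀ h : H, ∃ u ∈ U, ∃ v ∈ U, h = u + Complex.I • v) := by
  letI : InnerProductSpace ℝ H := InnerProductSpace.complexToReal
  haveI : CompleteSpace U := hUclosed.completeSpace_coe
  -- decomposition of complex scalars
  have hdecomp : ∀ (c : ℂ) (x : H), c • x = c.re • x + c.im • (Complex.I • x) := by
    intro c x
    have h1 : (c.re : ℂ) • x = c.re • x := by
      rw [← Complex.coe_algebraMap, algebraMap_smul]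
    have h2 : ((c.im : ℂ) * Complex.I) • x = c.im • (Complex.I • x) := by
      rw [mul_smul, ← Complex.coe_algebraMap, algebraMap_smul]
    calc c • x = ((c.re : ℂ) + (c.im : ℂ) * Complex.I) • x := by rw [Complex.re_add_im]
      _ = (c.re : ℂ) • x + ((c.im : ℂ) * Complex.I) • x := add_smul _ _ _
      _ = c.re • x + c.im • (Complex.I • x) := by rw [h1, h2]
  -- the complex submodule U ∩ iU
  set V : Submodule ℂ H :=
    { carrier := {x : H | x ∈ U ∧ Complex.I • x ∈ U}
      add_mem' := fun ha hb => ⟨U.add_mem ha.1 hb.1, by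
        rw [smul_add]; exact U.add_mem ha.2 hb.2⟩
      zero_mem' := ⟨U.zero_mem, by rw [smul_zero]; exact U.zero_mem⟩
      smul_mem' := by
        intro c x hx
        have hIIx : Complex.I • Complex.I • x = -x := by
          rw [smul_smul, Complex.I_mul_I, neg_one_smul]
        constructor
        · rw [hdecomp c x]
          exact U.add_mem (U.smul_mem _ hx.1) (U.smul_mem _ hx.2)
        · have : Complex.I • c • x = c • Complex.I • x := smul_comm _ _ _
          rw [this, hdecomp c (Complex.I • x), hIIx]
          exact U.add_mem (U.smul_mem _ hx.2) (U.smul_mem _ (U.neg_mem hx.1)) } with hV_def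
  have hVclosed : IsClosed (V : Set H) := by
    have : (V : Set H) = (U : Set H) ∩ ((fun x : H => Complex.I • x) ⁻¹' (U : Set H)) := rfl
    rw [this]
    exact hUclosed.inter (hUclosed.preimage (continuous_const_smul Complex.I))
  have hVinv : ∀ T ∈ 𝒮, ∀ v ∈ V, T v ∈ V := by
    intro T hT v hv
    exact ⟨hUinv T hT v hv.1, by
      rw [← map_smul]; exact hUinv T hT _ hv.2⟩
  have hVbot : V = ⊥ := by
    rcases hirr V hVclosed hVinv with h | h
    · exact h
    · exfalso
      apply hUH
      rw [eq_top_iff]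
      intro x _
      have : x ∈ V := by rw [h]; trivial
      exact this.1
  -- Part 1
  have part1 : (U : Set H) ∩ ((fun v => Complex.I • v) '' (U : Set H)) = {0} := by
    apply Set.eq_singleton_iff_unique_mem.mpr
    constructor
    · exact ⟨U.zero_mem, ⟨0, U.zero_mem, smul_zero _⟩⟩
    · rintro x ⟨hxU, y, hyU, rfl⟩
      have hxV : Complex.I • y ∈ V := by
        refine ⟨hxU, ?_⟩
        have : Complex.I • Complex.I • y = -y := by
          rw [smul_smul, Complex.I_mul_I, neg_one_smul]
        rw [this]
        exact U.neg_mem hyU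
      rw [hVbot, Submodule.mem_bot] at hxV
      exact hxV
  refine ⟨part1, ?_⟩
  -- the projections
  set P : H →L[ℝ] H := U.subtypeL.comp (U.orthogonalProjectionOnto) with hP_def
  have hPmem : ∀ x, P x ∈ U := fun x => (U.orthogonalProjectionOnto x).2
  have hPid : ∀ u ∈ U, P u = u := by
    intro u hu
    exact Submodule.starProjection_eq_self_iff.mpr hu
  have horth : ∀ (x : H), ∀ w ∈ U, ⟪x - P x, w⟫_ℝ = 0 := by
    intro x w hw
    exact Submodule.starProjection_inner_eq_zero x w hw
  have hPre : ∀ x y : H, (⟪P x, y⟫_ℂ).re = (⟪x, P y⟫_ℂ).re := by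
    intro x y
    exact Submodule.inner_starProjection_left_eq_right (K := U) x y
  -- P commutes with every S ∈ 𝒮
  have hPSm : ∀ S ∈ 𝒮, ∀ x, P (S x) = S (P x) := by
    intro S hS x
    apply Submodule.eq_starProjection_of_mem_of_inner_eq_zero (hUinv S hS _ (hPmem x))
    intro w hw
    have hsub : S x - S (P x) = S (x - P x) := (map_sub S x (P x)).symm
    rw [hsub]
    show (⟪S (x - P x), w⟫_ℂ).re = 0
    rw [← ContinuousLinearMap.adjoint_inner_right S, hskew S hS]
    have : ⟪x - P x, (-S) w⟫_ℂ = -⟪x - P x, S w⟫_ℂ := by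
      rw [ContinuousLinearMap.neg_apply, inner_neg_right]
    rw [this, Complex.neg_re, neg_eq_zero]
    exact horth x (S w) (hUinv S hS w hw)
  -- the operator B = P + Q as a real CLM
  set J : H →L[ℝ] H := ContinuousLinearMap.restrictScalars ℝ (Complex.I • (1 : H →L[ℂ] H))
    with hJ_def
  have hJ : ∀ x, J x = Complex.I • x := by intro x; simp [hJ_def]
  set B : H →L[ℝ] H := P - J.comp (P.comp J) with hB_def
  have hB : ∀ x, B x = P x - Complex.I • P (Complex.I • x) := by
    intro x
    simp [hB_def, hJ]
  have hIIs : ∀ z : H, Complex.I • Complex.I • z = -z := by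
    intro z; rw [smul_smul, Complex.I_mul_I, neg_one_smul]
  have hBi : ∀ x, B (Complex.I • x) = Complex.I • B x := by
    intro x
    rw [hB, hB]
    rw [hIIs x, map_neg, smul_neg, sub_neg_eq_add]
    rw [smul_sub, smul_smul, Complex.I_mul_I, neg_one_smul, sub_neg_eq_add]
    exact add_comm _ _
  -- upgrade to a complex CLM
  set Aop : H →L[ℂ] H :=
    { toFun := fun x => B x
      map_add' := fun x y => map_add B x y
      map_smul' := by
        intro c x
        simp only [RingHom.id_apply]
        rw [hdecomp c x, map_add, map_smul, map_smul, hBi, hdecomp c (B x)]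
      cont := B.continuous } with hAop_def
  have hA_apply : ∀ x, Aop x = P x - Complex.I • P (Complex.I • x) := fun x => hB x
  have hAi : ∀ x, Aop (Complex.I • x) = Complex.I • Aop x := fun x => hBi x
  -- selfadjointness
  have hre1 : ∀ x y : H, (⟪x, Complex.I • y⟫_ℂ).re = -(⟪x, y⟫_ℂ).im := by
    intro x y
    rw [inner_smul_right]
    simp [Complex.mul_re]
  have hre2 : ∀ x y : H, (⟪Complex.I • x, y⟫_ℂ).re = (⟪x, y⟫_ℂ).im := by
    intro x y
    rw [inner_smul_left]
    simp [Complex.conj_I, Complex.mul_re]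
  have hre : ∀ x y : H, (⟪Aop x, y⟫_ℂ).re = (⟪x, Aop y⟫_ℂ).re := by
    intro x y
    rw [hA_apply, hA_apply, inner_sub_left, inner_sub_right]
    simp only [Complex.sub_re]
    have a1 : (⟪Complex.I • P (Complex.I • x), y⟫_ℂ).re
        = (⟪P (Complex.I • x), y⟫_ℂ).im := hre2 _ _
    have a2 : (⟪x, Complex.I • P (Complex.I • y)⟫_ℂ).re
        = -(⟪x, P (Complex.I • y)⟫_ℂ).im := hre1 _ _
    have a3 : (⟪P (Complex.I • x), Complex.I • y⟫_ℂ).re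
        = -(⟪P (Complex.I • x), y⟫_ℂ).im := hre1 _ _
    have a4 : (⟪Complex.I • x, P (Complex.I • y)⟫_ℂ).re
        = (⟪x, P (Complex.I • y)⟫_ℂ).im := hre2 _ _
    have a5 := hPre (Complex.I • x) (Complex.I • y)
    have a6 := hPre x y
    linarith
  have hsa : ∀ x y : H, ⟪Aop x, y⟫_ℂ = ⟪x, Aop y⟫_ℂ := by
    intro x y
    apply Complex.ext
    · exact hre x y
    · have e1 : (⟪Aop x, Complex.I • y⟫_ℂ).re = (⟪x, Complex.I • Aop y⟫_ℂ).re := by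
        rw [← hAi y]
        exact hre x (Complex.I • y)
      have e2 := hre1 (Aop x) y
      have e3 := hre1 x (Aop y)
      linarith
  have hself : IsSelfAdjoint Aop := by
    have : Aop = ContinuousLinearMap.adjoint Aop :=
      (ContinuousLinearMap.eq_adjoint_iff Aop Aop).mpr hsa
    rw [IsSelfAdjoint, ContinuousLinearMap.star_eq_adjoint]
    exact this.symm
  have hAcomm : ∀ S ∈ 𝒮, S * Aop = Aop * S := by
    intro S hS
    ext x
    show S (Aop x) = Aop (S x)
    rw [hA_apply, hA_apply, map_sub, map_smul, ← hPSm S hS x, ← hPSm S hS (Complex.I • x),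
      map_smul]
  obtain ⟨c, hc⟩ := aux_schur 𝒮 hirr Aop hself hAcomm
  -- c must equal 1
  obtain ⟨u₀, hu₀U, hu₀⟩ := Submodule.exists_mem_ne_zero_of_ne_bot hU0
  have hz : Complex.I • (-(P (Complex.I • u₀))) = (c - 1) • u₀ := by
    have h1 : Aop u₀ = u₀ - Complex.I • P (Complex.I • u₀) := by
      rw [hA_apply, hPid u₀ hu₀U]
    have h2 : Aop u₀ = c • u₀ := hc u₀
    have : Complex.I • P (Complex.I • u₀) = u₀ - c • u₀ := by
      rw [h2] at h1
      rw [h1]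
      abel
    rw [smul_neg, this, sub_smul, one_smul]
    module
  have hc1 : c = 1 := by
    have hmem : Complex.I • (-(P (Complex.I • u₀)))
        ∈ (U : Set H) ∩ ((fun v => Complex.I • v) '' (U : Set H)) := by
      constructor
      · rw [hz]; exact U.smul_mem _ hu₀U
      · exact ⟨-(P (Complex.I • u₀)), U.neg_mem (hPmem _), rfl⟩
    rw [part1] at hmem
    have : (c - 1) • u₀ = 0 := by rw [← hz]; exact hmem
    rcases smul_eq_zero.mp this with h | h
    · linarith [sub_eq_zero.mp h]
    · exact absurd h hu₀
  -- conclude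
  intro h
  refine ⟨P h, hPmem h, -(P (Complex.I • h)), U.neg_mem (hPmem _), ?_⟩
  have := hc h
  rw [hc1, one_smul] at this
  conv_lhs => rw [← this, hA_apply h]
  rw [smul_neg, ← sub_eq_add_neg]
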